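/- Let 0 < α < 1, η ≥ 0, and let f ∈ C¹([0,∞)) with f' bounded. Then, with μ(ξ) = |ξ|^{(2α-1)/2} and 𝔠 = sin(απ)/π, one has 𝔠 ∫_ℝ μ(ξ) φ(t,ξ) dξ = (1/Γ(1-α)) ∫₀ᵗ e^{-η(t-s)} (t-s)^{-α} f'(s) ds, where φ(t,ξ) = ∫₀ᵗ μ(ξ) f'(s) e^{-(ξ²+η)(t-s)} ds. -/

import Mathlib

open MeasureTheory Real intervalIntegral

lemma aux_integrable_abs_rpow {b s : ℝ} (hb : 0 < b) (hs : -1 < s) :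
    Integrable fun ξ : ℝ => |ξ| ^ s * Real.exp (-b * ξ ^ 2) := by
  have hIoi : IntegrableOn (fun ξ : ℝ => |ξ| ^ s * Real.exp (-b * ξ ^ 2)) (Set.Ioi 0) := by
    refine (integrableOn_rpow_mul_exp_neg_mul_sq hb hs).congr_fun
      (fun x hx => by rw [abs_of_pos hx]) measurableSet_Ioi
  have hIic : IntegrableOn (fun ξ : ℝ => |ξ| ^ s * Real.exp (-b * ξ ^ 2)) (Set.Iic 0) := by
    rw [← Measure.map_neg_eq_self (volume : Measure ℝ)]
    have m : MeasurableEmbedding fun x : ℝ => -x :=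
      (Homeomorph.neg ℝ).measurableEmbedding
    rw [m.integrableOn_map_iff]
    simp only [Function.comp_def, abs_neg, neg_sq, Set.neg_preimage, Set.neg_Iic, neg_zero]
    exact Iff.mpr integrableOn_Ici_iff_integrableOn_Ioi hIoi
  have := hIic.union hIoi
  rwa [Set.Iic_union_Ioi, integrableOn_univ] at this

lemma aux_integral_abs_rpow {b α : ℝ} (hb : 0 < b) (hα0 : 0 < α) (hα1 : α < 1) :
    ∫ ξ : ℝ, |ξ| ^ (2 * α - 1) * Real.exp (-b * ξ ^ 2) = Real.Gamma α * b ^ (-α) := by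
  have h := _root_.integral_comp_abs
    (f := fun x : ℝ => x ^ (2 * α - 1) * Real.exp (-b * x ^ (2 : ℝ)))
  simp only [Real.rpow_two, sq_abs] at h
  have hIoi := integral_rpow_mul_exp_neg_mul_rpow two_pos
    (show (-1:ℝ) < 2 * α - 1 by linarith) hb
  simp only [Real.rpow_two] at hIoi
  rw [h, hIoi, show -(2 * α - 1 + 1) / 2 = -α by ring, show (2 * α - 1 + 1) / 2 = α by ring]
  ring

theorem stmt_7 (α η : ℝ) (hα0 : 0 < α) (hα1 : α < 1) (hη : 0 ≤ η)
    (f : ℝ → ℝ) (hf : ContDiff ℝ 1 f) (C : ℝ) (hf' : ∀ s, |deriv f s| ≤ C)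
    (φ : ℝ → ℝ → ℝ)
    (hφ : ∀ t ξ, φ t ξ =
      ∫ s in (0 : ℝ)..t, |ξ| ^ ((2 * α - 1) / 2) * deriv f s * Real.exp (-(ξ ^ 2 + η) * (t - s))) :
    ∀ t : ℝ, 0 ≤ t →
      (Real.sin (α * π) / π) * ∫ ξ : ℝ, |ξ| ^ ((2 * α - 1) / 2) * φ t ξ =
        (1 / Real.Gamma (1 - α)) *
          ∫ s in (0 : ℝ)..t, Real.exp (-η * (t - s)) * (t - s) ^ (-α) * deriv f s := by
  intro t ht
  have hcont : Continuous (deriv f) := hf.continuous_deriv le_rfl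
  have hC : 0 ≤ C := le_trans (abs_nonneg _) (hf' 0)
  have hq : (-1 : ℝ) < 2 * α - 1 := by linarith
  set F : ℝ → ℝ → ℝ :=
    fun ξ s => |ξ| ^ (2 * α - 1) * deriv f s * Real.exp (-(ξ ^ 2 + η) * (t - s)) with hF
  -- pointwise rewriting of the ξ-integrand
  have key : (fun ξ : ℝ => |ξ| ^ ((2 * α - 1) / 2) * φ t ξ)
      = fun ξ : ℝ => ∫ s in Set.Ioc (0 : ℝ) t, F ξ s := by
    funext ξ
    have habs : |ξ| ^ ((2 * α - 1) / 2) * |ξ| ^ ((2 * α - 1) / 2) = |ξ| ^ (2 * α - 1) := by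
      have h1 : |ξ| ^ ((2 * α - 1) / 2) * |ξ| ^ ((2 * α - 1) / 2)
          = (|ξ| ^ ((2 * α - 1) / 2)) ^ (2 : ℝ) := by rw [Real.rpow_two]; ring
      rw [h1, ← Real.rpow_mul (abs_nonneg ξ)]
      congr 1
      ring
    rw [hφ]
    simp only [mul_assoc, intervalIntegral.integral_const_mul]
    rw [← mul_assoc, habs, ← intervalIntegral.integral_const_mul,
      intervalIntegral.integral_of_le ht]
    refine setIntegral_congr_fun measurableSet_Ioc fun x _ => ?_
    simp only [hF]
    ring
  -- a.e. statements on the restricted measure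
  have hne : ∀ᵐ s ∂(volume.restrict (Set.Ioc (0 : ℝ) t)), s ≠ t := by
    refine ae_iff.mpr ?_
    have hset : {s : ℝ | ¬ s ≠ t} = {t} := by ext x; simp
    rw [hset, Measure.restrict_apply (measurableSet_singleton t)]
    exact measure_mono_null Set.inter_subset_left (measure_singleton t)
  have hmem : ∀ᵐ s ∂(volume.restrict (Set.Ioc (0 : ℝ) t)), s ∈ Set.Ioc (0 : ℝ) t :=
    ae_restrict_mem measurableSet_Ioc
  -- pointwise factorization of F
  have hfact : ∀ s, s ∈ Set.Ioc (0 : ℝ) t → ∀ ξ : ℝ,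
      F ξ s = (deriv f s * Real.exp (-η * (t - s))) *
        (|ξ| ^ (2 * α - 1) * Real.exp (-(t - s) * ξ ^ 2)) := by
    intro s _ ξ
    have hFa : F ξ s = |ξ| ^ (2 * α - 1) * deriv f s * Real.exp (-(ξ ^ 2 + η) * (t - s)) := rfl
    rw [hFa]
    rw [show -(ξ ^ 2 + η) * (t - s) = -(t - s) * ξ ^ 2 + -η * (t - s) by ring, Real.exp_add]
    ring
  -- integral in ξ of F for fixed s < t
  have hval : ∀ s, s ∈ Set.Ioc (0 : ℝ) t → s ≠ t →
      (∫ ξ : ℝ, F ξ s) =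
        Real.Gamma α * (Real.exp (-η * (t - s)) * (t - s) ^ (-α) * deriv f s) := by
    intro s hs hst
    have hr : 0 < t - s := sub_pos.mpr (lt_of_le_of_ne hs.2 hst)
    rw [show (fun ξ : ℝ => F ξ s) = fun ξ : ℝ => (deriv f s * Real.exp (-η * (t - s))) *
        (|ξ| ^ (2 * α - 1) * Real.exp (-(t - s) * ξ ^ 2)) from funext (hfact s hs)]
    rw [MeasureTheory.integral_const_mul, aux_integral_abs_rpow hr hα0 hα1]
    ring
  -- the same for the norms
  have hvalnorm : ∀ s, s ∈ Set.Ioc (0 : ℝ) t → s ≠ t →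
      (∫ ξ : ℝ, ‖F ξ s‖) =
        |deriv f s| * Real.exp (-η * (t - s)) * (Real.Gamma α * (t - s) ^ (-α)) := by
    intro s hs hst
    have hr : 0 < t - s := sub_pos.mpr (lt_of_le_of_ne hs.2 hst)
    have : (fun ξ : ℝ => ‖F ξ s‖) = fun ξ : ℝ => (|deriv f s| * Real.exp (-η * (t - s))) *
        (|ξ| ^ (2 * α - 1) * Real.exp (-(t - s) * ξ ^ 2)) := by
      funext ξ
      rw [Real.norm_eq_abs, hfact s hs ξ, abs_mul, abs_mul, abs_mul,
        abs_of_nonneg (Real.rpow_nonneg (abs_nonneg ξ) _),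
        abs_of_nonneg (Real.exp_nonneg _), abs_of_nonneg (Real.exp_nonneg _)]
    rw [this, MeasureTheory.integral_const_mul, aux_integral_abs_rpow hr hα0 hα1]
  -- integrability of (t-s)^{-α} on (0,t]
  have hpow : IntegrableOn (fun s : ℝ => (t - s) ^ (-α)) (Set.Ioc 0 t) := by
    have h1 : IntervalIntegrable (fun x : ℝ => x ^ (-α)) volume t 0 :=
      intervalIntegrable_rpow' (by linarith)
    have h2 := h1.comp_sub_left t
    simp only [sub_self, sub_zero] at h2
    exact (intervalIntegrable_iff_integrableOn_Ioc_of_le ht).mp h2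
  -- integrability of the product function
  have hInt : Integrable (Function.uncurry F)
      ((volume : Measure ℝ).prod (volume.restrict (Set.Ioc (0 : ℝ) t))) := by
    have hmeas : AEStronglyMeasurable (Function.uncurry F)
        ((volume : Measure ℝ).prod (volume.restrict (Set.Ioc (0 : ℝ) t))) := by
      apply Measurable.aestronglyMeasurable
      apply Measurable.mul
      · exact Measurable.mul (by fun_prop) (hcont.measurable.comp measurable_snd)
      · fun_prop
    rw [integrable_prod_iff' hmeas]
    constructor
    · filter_upwards [hmem, hne] with s hs hst
      have hr : 0 < t - s := sub_pos.mpr (lt_of_le_of_ne hs.2 hst)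
      have := (aux_integrable_abs_rpow hr hq).const_mul
        (deriv f s * Real.exp (-η * (t - s)))
      exact this.congr (Filter.Eventually.of_forall fun ξ => (hfact s hs ξ).symm)
    · -- integrable majorant computation
      have hG : Integrable (fun s : ℝ =>
          |deriv f s| * Real.exp (-η * (t - s)) * (Real.Gamma α * (t - s) ^ (-α)))
          (volume.restrict (Set.Ioc (0 : ℝ) t)) := by
        refine Integrable.mono' ((hpow.const_mul (C * Real.Gamma α))) ?_ ?_
        · apply Measurable.aestronglyMeasurable
          have hm := hcont.measurable
          fun_prop
        · filter_upwards [hmem] with s hs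
          have h1 : 0 ≤ (t - s) ^ (-α) := Real.rpow_nonneg (by linarith [hs.2]) _
          have h2 : Real.exp (-η * (t - s)) ≤ 1 := by
            rw [Real.exp_le_one_iff]
            nlinarith [hs.2]
          have h3 : (0:ℝ) < Real.Gamma α := Real.Gamma_pos_of_pos hα0
          rw [Real.norm_eq_abs, abs_of_nonneg (by positivity)]
          calc |deriv f s| * Real.exp (-η * (t - s)) * (Real.Gamma α * (t - s) ^ (-α))
              ≤ C * 1 * (Real.Gamma α * (t - s) ^ (-α)) := by
                apply mul_le_mul _ le_rfl (by positivity) (by positivity)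
                exact mul_le_mul (hf' s) h2 (Real.exp_nonneg _) hC
            _ = C * Real.Gamma α * (t - s) ^ (-α) := by ring
      refine hG.congr ?_
      filter_upwards [hmem, hne] with s hs hst
      exact (hvalnorm s hs hst).symm
  -- putting it together
  have L : (∫ ξ : ℝ, |ξ| ^ ((2 * α - 1) / 2) * φ t ξ) =
      Real.Gamma α *
        ∫ s in Set.Ioc (0 : ℝ) t, Real.exp (-η * (t - s)) * (t - s) ^ (-α) * deriv f s := by
    rw [key, MeasureTheory.integral_integral_swap hInt, ← MeasureTheory.integral_const_mul]
    refine integral_congr_ae ?_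
    filter_upwards [hmem, hne] with s hs hst
    exact hval s hs hst
  rw [L, intervalIntegral.integral_of_le ht, ← mul_assoc]
  congr 1
  have h := Real.Gamma_mul_Gamma_one_sub α
  have hsin : Real.sin (π * α) ≠ 0 := by
    refine ne_of_gt (Real.sin_pos_of_pos_of_lt_pi (by positivity) ?_)
    nlinarith [Real.pi_pos]
  have hΓ : Real.Gamma (1 - α) ≠ 0 := ne_of_gt (Real.Gamma_pos_of_pos (by linarith))
  have hπ : (π : ℝ) ≠ 0 := Real.pi_ne_zero
  have hsin2 : Real.sin (α * π) ≠ 0 := by rwa [mul_comm]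
  rw [mul_comm α π]
  field_simp at h ⊢
  linarith [h]
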